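/- (Smyth) Let n ≥ 1 and p ≥ 1. If |p − 2| < 2·log(1 + 2/n)/log(n+2), then the largest cardinality of an equilateral set in ℓ_p^n is exactly n+1, i.e. e(ℓ_p^n) = n+1. -/

import Mathlib

open Finset

/-- The p-norm on `ℝ^n`. -/
noncomputable def pnorm (p : ℝ) {n : ℕ} (x : Fin n → ℝ) : ℝ :=
  (∑ i, |x i| ^ p) ^ (1 / p)

/-- A set `S ⊆ ℝ^n` is equilateral with respect to the p-norm if there is `λ > 0`
with `‖x - y‖_p = λ` for all distinct `x, y ∈ S`. -/
def IsEquilateral (p : ℝ) {n : ℕ} (S : Set (Fin n → ℝ)) : Prop :=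
  ∃ lam > 0, ∀ x ∈ S, ∀ y ∈ S, x ≠ y → pnorm p (x - y) = lam

/- ### Auxiliary analytic lemmas -/

private lemma sum_rpow_le_rpow_sum {n : ℕ} (b : Fin n → ℝ) (hb : ∀ i, 0 ≤ b i)
    {r : ℝ} (hr : 1 ≤ r) : ∑ i, b i ^ r ≤ (∑ i, b i) ^ r := by
  have hr0 : (0:ℝ) < r := lt_of_lt_of_le one_pos hr
  set B := ∑ i, b i with hB
  have hB0 : 0 ≤ B := Finset.sum_nonneg fun i _ => hb i
  rcases eq_or_lt_of_le hB0 with h0 | h0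
  · have hz : ∀ i ∈ Finset.univ, b i = 0 :=
      (Finset.sum_eq_zero_iff_of_nonneg (fun i _ => hb i)).mp h0.symm
    have : ∑ i, b i ^ r = 0 := Finset.sum_eq_zero fun i hi => by
      rw [hz i hi, Real.zero_rpow (ne_of_gt hr0)]
    rw [this, ← h0, Real.zero_rpow (ne_of_gt hr0)]
  · have hstep : ∀ i, b i ^ r ≤ b i * B ^ (r - 1) := by
      intro i
      rcases eq_or_lt_of_le (hb i) with h | h
      · rw [← h, Real.zero_rpow (ne_of_gt hr0), zero_mul]
      · have h1 : b i ^ r = b i ^ (1:ℝ) * b i ^ (r - 1) := by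
          rw [← Real.rpow_add h]; ring_nf
        rw [h1, Real.rpow_one]
        have : b i ^ (r-1) ≤ B ^ (r-1) :=
          Real.rpow_le_rpow (hb i) (Finset.single_le_sum (fun j _ => hb j) (Finset.mem_univ i))
            (by linarith)
        exact mul_le_mul_of_nonneg_left this (hb i)
    calc ∑ i, b i ^ r ≤ ∑ i, b i * B ^ (r-1) := Finset.sum_le_sum fun i _ => hstep i
      _ = B * B ^ (r-1) := by rw [← Finset.sum_mul]
      _ = B ^ (1:ℝ) * B ^ (r-1) := by rw [Real.rpow_one]
      _ = B ^ r := by rw [← Real.rpow_add h0]; ring_nf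

private lemma rpow_sum_le_mul_sum_rpow {n : ℕ} (hn : 1 ≤ n) (b : Fin n → ℝ)
    (hb : ∀ i, 0 ≤ b i) {r : ℝ} (hr : 1 ≤ r) :
    (∑ i, b i) ^ r ≤ (n:ℝ) ^ (r - 1) * ∑ i, b i ^ r := by
  have hn0 : (0:ℝ) < n := by exact_mod_cast Nat.lt_of_lt_of_le Nat.zero_lt_one hn
  have hw : ∑ _i : Fin n, (1/(n:ℝ)) = 1 := by
    rw [Finset.sum_const, Finset.card_univ, Fintype.card_fin, nsmul_eq_mul]
    field_simp
  have key := Real.rpow_arith_mean_le_arith_mean_rpow Finset.univ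
    (fun _ => 1/(n:ℝ)) b (fun i _ => by positivity) hw (fun i _ => hb i) hr
  rw [← Finset.mul_sum, ← Finset.mul_sum] at key
  rw [Real.mul_rpow (by positivity) (Finset.sum_nonneg fun i _ => hb i)] at key
  have hc : (0:ℝ) < (n:ℝ) ^ r := Real.rpow_pos_of_pos hn0 r
  have h2 := mul_le_mul_of_nonneg_left key (le_of_lt hc)
  have h1 : ((n:ℝ)^r) * ((1/(n:ℝ))^r * (∑ i, b i)^r) = (∑ i, b i)^r := by
    rw [one_div, Real.inv_rpow hn0.le, ← mul_assoc, mul_inv_cancel₀ (ne_of_gt hc), one_mul]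
  have h3 : ((n:ℝ)^r) * ((1/(n:ℝ)) * ∑ i, b i ^ r) = (n:ℝ)^(r-1) * ∑ i, b i ^ r := by
    rw [Real.rpow_sub hn0, Real.rpow_one]; field_simp
  rw [h1, h3] at h2
  exact h2

/- ### The quadratic form identity -/

private lemma quad_eq_zero {m : ℕ} (v a : Fin m → ℝ) (hP : ∑ i, v i = 0)
    (hQ : ∑ i, v i * a i = 0) :
    ∑ i, ∑ j, v i * v j * (a i - a j)^2 = 0 := by
  have expand : ∀ i j : Fin m, v i * v j * (a i - a j)^2
      = (v i * a i ^ 2) * v j - 2 * ((v i * a i) * (v j * a j)) + v i * (v j * a j ^ 2) := by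
    intro i j; ring
  simp only [expand, Finset.sum_add_distrib, Finset.sum_sub_distrib, ← Finset.mul_sum]
  rw [hP, hQ]
  simp only [mul_zero, zero_mul, sub_zero, zero_sub, neg_zero, add_zero, zero_add]
  rw [← Finset.sum_mul, hP, zero_mul]
  simp

/- ### Upper/lower estimates for the quadratic form -/

private lemma upper_est {m : ℕ} (S : Fin m → Fin m → ℝ) (u : Fin m → ℝ)
    (hu : ∀ i, 0 ≤ u i) {b : ℝ} (hb : 0 ≤ b)
    (hS0 : ∀ i, S i i = 0) (hSb : ∀ i j, i ≠ j → S i j ≤ b) :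
    ∑ i, ∑ j, u i * u j * S i j ≤ b * (∑ i, u i)^2 - b * ∑ i, (u i)^2 := by
  set t := ∑ i, u i with ht
  have step : ∀ i : Fin m, ∑ j, u i * u j * S i j ≤ u i * (b * (t - u i)) := by
    intro i
    have h1 : ∑ j, u i * u j * S i j = u i * ∑ j, u j * S i j := by
      rw [Finset.mul_sum]; apply Finset.sum_congr rfl; intro j _; ring
    rw [h1]
    apply mul_le_mul_of_nonneg_left _ (hu i)
    have h2 : ∑ j, u j * S i j = ∑ j ∈ Finset.univ.erase i, u j * S i j := by
      rw [← Finset.add_sum_erase Finset.univ _ (Finset.mem_univ i), hS0, mul_zero, zero_add]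
    rw [h2]
    calc ∑ j ∈ Finset.univ.erase i, u j * S i j
        ≤ ∑ j ∈ Finset.univ.erase i, u j * b := by
          apply Finset.sum_le_sum; intro j hj
          exact mul_le_mul_of_nonneg_left (hSb i j (Ne.symm (Finset.mem_erase.mp hj).1)) (hu j)
      _ = (∑ j ∈ Finset.univ.erase i, u j) * b := by rw [Finset.sum_mul]
      _ = (t - u i) * b := by rw [Finset.sum_erase_eq_sub (Finset.mem_univ i)]
      _ = b * (t - u i) := by ring
  calc ∑ i, ∑ j, u i * u j * S i j ≤ ∑ i, u i * (b * (t - u i)) :=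
        Finset.sum_le_sum fun i _ => step i
    _ = ∑ i, (u i * (b * t) - b * (u i)^2) := by
        apply Finset.sum_congr rfl; intro i _; ring
    _ = (∑ i, u i * (b * t)) - b * ∑ i, (u i)^2 := by
        simp only [Finset.sum_sub_distrib, Finset.mul_sum]
    _ = b * t^2 - b * ∑ i, (u i)^2 := by
        rw [← Finset.sum_mul, ← ht]; ring

private lemma lower_est {m : ℕ} (S : Fin m → Fin m → ℝ) (u w : Fin m → ℝ)
    (hu : ∀ i, 0 ≤ u i) (hw : ∀ i, 0 ≤ w i) (hdisj : ∀ i, u i * w i = 0)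
    {a : ℝ} (hSa : ∀ i j, i ≠ j → a ≤ S i j) :
    a * ((∑ i, u i) * (∑ i, w i)) ≤ ∑ i, ∑ j, u i * w j * S i j := by
  rw [Finset.sum_mul_sum, Finset.mul_sum]
  apply Finset.sum_le_sum; intro i _
  rw [Finset.mul_sum]
  apply Finset.sum_le_sum; intro j _
  rcases eq_or_ne i j with rfl | hij
  · simp [hdisj i]
  · calc a * (u i * w j) ≤ S i j * (u i * w j) :=
        mul_le_mul_of_nonneg_right (hSa i j hij) (mul_nonneg (hu i) (hw j))
      _ = u i * w j * S i j := by ring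

private lemma arith_contra : ∀ U W T KC LC A B N : ℝ, 0 < T → 0 < A → 0 < B → 1 ≤ KC → 1 ≤ LC →
    KC + LC ≤ N + 2 → B * N < A * (N + 2) →
    T ≤ KC * U → T ≤ LC * W →
    2*A*T + B*U + B*W ≤ 2*B*T → False := by
  intro U W T KC LC A B N hT hA hB hKC hLC hsum hAB hcuU hcwW hmn
  have hKC0 : (0:ℝ) < KC := lt_of_lt_of_le one_pos hKC
  have hLC0 : (0:ℝ) < LC := lt_of_lt_of_le one_pos hLC
  have hKL0 : 0 < KC * LC := mul_pos hKC0 hLC0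
  have h1 : B*T ≤ B*(KC*U) := mul_le_mul_of_nonneg_left hcuU hB.le
  have h2 : B*T ≤ B*(LC*W) := mul_le_mul_of_nonneg_left hcwW hB.le
  have h3 : (2*A*T + B*U + B*W) * (KC*LC) ≤ (2*B*T) * (KC*LC) :=
    mul_le_mul_of_nonneg_right hmn hKL0.le
  have h4 := mul_le_mul_of_nonneg_right h1 hLC0.le
  have h5 := mul_le_mul_of_nonneg_right h2 hKC0.le
  have h6 : 2*A*(KC*LC) + B*LC + B*KC ≤ 2*B*(KC*LC) := by
    nlinarith [h3, h4, h5, hT]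
  have hBA : A < B := by nlinarith
  have h7 : 2*B ≤ (B - A)*(KC + LC) := by
    nlinarith [h6, mul_nonneg (sub_nonneg.2 hBA.le) (sq_nonneg (KC - LC))]
  nlinarith [h7, hAB, mul_nonneg (sub_nonneg.2 hBA.le)
    (by linarith : (0:ℝ) ≤ N + 2 - (KC + LC))]

/- ### The key geometric lemma: no n+2 points with tightly pinched distances -/

private lemma no_overcrowd {n : ℕ} (x : Fin (n+2) → (Fin n → ℝ)) {a b : ℝ}
    (ha : 0 < a) (hab : b * n < a * (n + 2))
    (hs : ∀ i j, i ≠ j → a ≤ (∑ k, (x i k - x j k)^2) ∧ (∑ k, (x i k - x j k)^2) ≤ b) :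
    False := by
  classical
  set S : Fin (n+2) → Fin (n+2) → ℝ := fun i j => ∑ k, (x i k - x j k)^2 with hSdef
  have hS0 : ∀ i, S i i = 0 := by intro i; simp [hSdef]
  have h01 : (0 : Fin (n+2)) ≠ 1 := by
    intro hc
    have := congrArg Fin.val hc
    simp at this
  have hb0 : 0 < b := lt_of_lt_of_le ha ((hs 0 1 h01).1.trans (hs 0 1 h01).2)
  -- Step 1: affine dependence
  have hdep : ¬ LinearIndependent ℝ (fun i : Fin (n+2) => ((x i, 1) : (Fin n → ℝ) × ℝ)) := by
    intro hli
    have hcard := hli.fintype_card_le_finrank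
    rw [Module.finrank_prod, Module.finrank_self, Module.finrank_pi] at hcard
    simp only [Fintype.card_fin] at hcard
    omega
  obtain ⟨v, hvsum, i₀, hvi₀⟩ := Fintype.not_linearIndependent_iff.mp hdep
  have hP : ∑ i, v i = 0 := by
    have := congrArg Prod.snd hvsum
    simpa [Prod.snd_sum] using this
  have hQ : ∀ k, ∑ i, v i * x i k = 0 := by
    intro k
    have h1 := congrArg Prod.fst hvsum
    rw [Prod.fst_sum] at h1
    have h2 := congrFun h1 k
    simpa using h2
  -- Step 2: quadratic form vanishes
  have hzero : ∑ i, ∑ j, v i * v j * S i j = 0 := by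
    have hswap : ∑ i, ∑ j, v i * v j * S i j
        = ∑ k, ∑ i, ∑ j, v i * v j * (x i k - x j k)^2 := by
      simp only [hSdef, Finset.mul_sum]
      calc ∑ i, ∑ j, ∑ k, v i * v j * (x i k - x j k)^2
          = ∑ i, ∑ k, ∑ j, v i * v j * (x i k - x j k)^2 :=
            Finset.sum_congr rfl fun i _ => Finset.sum_comm
        _ = ∑ k, ∑ i, ∑ j, v i * v j * (x i k - x j k)^2 := Finset.sum_comm
    rw [hswap]
    apply Finset.sum_eq_zero; intro k _
    exact quad_eq_zero v (fun i => x i k) hP (hQ k)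
  -- Step 3: positive and negative parts
  set u : Fin (n+2) → ℝ := fun i => max (v i) 0 with hu
  set w : Fin (n+2) → ℝ := fun i => max (-v i) 0 with hw
  have hu0 : ∀ i, 0 ≤ u i := fun i => le_max_right _ _
  have hw0 : ∀ i, 0 ≤ w i := fun i => le_max_right _ _
  have hv : ∀ i, v i = u i - w i := by
    intro i
    simp only [hu, hw]
    rcases le_total (v i) 0 with h | h
    · rw [max_eq_right h, max_eq_left (neg_nonneg.2 h)]; ring
    · rw [max_eq_left h, max_eq_right (neg_nonpos.2 h)]; ring
  have hdisj : ∀ i, u i * w i = 0 := by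
    intro i
    simp only [hu, hw]
    rcases le_total (v i) 0 with h | h
    · rw [max_eq_right h, zero_mul]
    · rw [max_eq_right (neg_nonpos.2 h), mul_zero]
  set t := ∑ i, u i with htdef
  have htw : ∑ i, w i = t := by
    have h2 : ∑ i, (u i - w i) = ∑ i, v i := Finset.sum_congr rfl fun i _ => (hv i).symm
    rw [Finset.sum_sub_distrib, hP] at h2
    rw [htdef]; linarith
  have ht : 0 < t := by
    rcases lt_or_ge 0 t with h | h
    · exact h
    · exfalso
      have ht0 : t = 0 := le_antisymm h (Finset.sum_nonneg fun i _ => hu0 i)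
      have hu00 : ∀ i ∈ Finset.univ, u i = 0 :=
        (Finset.sum_eq_zero_iff_of_nonneg (fun i _ => hu0 i)).mp ht0
      have hw00 : ∀ i ∈ Finset.univ, w i = 0 :=
        (Finset.sum_eq_zero_iff_of_nonneg (fun i _ => hw0 i)).mp (htw.trans ht0)
      apply hvi₀
      rw [hv i₀, hu00 i₀ (Finset.mem_univ i₀), hw00 i₀ (Finset.mem_univ i₀), sub_zero]
  -- supports
  set K := Finset.univ.filter (fun i => 0 < u i) with hK
  set L := Finset.univ.filter (fun i => 0 < w i) with hL
  have hKL : Disjoint K L := by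
    rw [Finset.disjoint_left]
    intro i hi hi'
    rw [hK, Finset.mem_filter] at hi
    rw [hL, Finset.mem_filter] at hi'
    have := hdisj i
    nlinarith [hi.2, hi'.2]
  have hKne : K.Nonempty := by
    by_contra hne
    rw [Finset.not_nonempty_iff_eq_empty] at hne
    have h0 : t = 0 := by
      rw [htdef]
      apply Finset.sum_eq_zero
      intro i _
      rcases lt_or_eq_of_le (hu0 i) with hlt | heq
      · exfalso
        have hiK : i ∈ K := by rw [hK, Finset.mem_filter]; exact ⟨Finset.mem_univ i, hlt⟩
        rw [hne] at hiK; exact absurd hiK (Finset.notMem_empty i)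
      · exact heq.symm
    linarith
  have hLne : L.Nonempty := by
    by_contra hne
    rw [Finset.not_nonempty_iff_eq_empty] at hne
    have h0 : (0:ℝ) = t := by
      rw [← htw]
      symm
      apply Finset.sum_eq_zero
      intro i _
      rcases lt_or_eq_of_le (hw0 i) with hlt | heq
      · exfalso
        have hiL : i ∈ L := by rw [hL, Finset.mem_filter]; exact ⟨Finset.mem_univ i, hlt⟩
        rw [hne] at hiL; exact absurd hiL (Finset.notMem_empty i)
      · exact heq.symm
    linarith
  -- Cauchy-Schwarz on the supports
  have hsumK : t = ∑ i ∈ K, u i := by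
    rw [htdef]
    symm
    apply Finset.sum_subset (Finset.subset_univ K)
    intro i _ hiK
    rcases lt_or_eq_of_le (hu0 i) with hlt | heq
    · exact absurd (by rw [hK, Finset.mem_filter]; exact ⟨Finset.mem_univ i, hlt⟩) hiK
    · exact heq.symm
  have hsumL : t = ∑ i ∈ L, w i := by
    rw [← htw]
    symm
    apply Finset.sum_subset (Finset.subset_univ L)
    intro i _ hiL
    rcases lt_or_eq_of_le (hw0 i) with hlt | heq
    · exact absurd (by rw [hL, Finset.mem_filter]; exact ⟨Finset.mem_univ i, hlt⟩) hiL
    · exact heq.symm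
  have hcu : t^2 ≤ (K.card : ℝ) * ∑ i, (u i)^2 := by
    calc t^2 = (∑ i ∈ K, u i)^2 := by rw [← hsumK]
      _ ≤ (K.card : ℝ) * ∑ i ∈ K, (u i)^2 := sq_sum_le_card_mul_sum_sq
      _ ≤ (K.card : ℝ) * ∑ i, (u i)^2 := by
          apply mul_le_mul_of_nonneg_left _ (Nat.cast_nonneg _)
          exact Finset.sum_le_sum_of_subset_of_nonneg (Finset.subset_univ K)
            (fun i _ _ => sq_nonneg _)
  have hcw : t^2 ≤ (L.card : ℝ) * ∑ i, (w i)^2 := by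
    calc t^2 = (∑ i ∈ L, w i)^2 := by rw [← hsumL]
      _ ≤ (L.card : ℝ) * ∑ i ∈ L, (w i)^2 := sq_sum_le_card_mul_sum_sq
      _ ≤ (L.card : ℝ) * ∑ i, (w i)^2 := by
          apply mul_le_mul_of_nonneg_left _ (Nat.cast_nonneg _)
          exact Finset.sum_le_sum_of_subset_of_nonneg (Finset.subset_univ L)
            (fun i _ _ => sq_nonneg _)
  have hcardsum : (K.card : ℝ) + (L.card : ℝ) ≤ (n:ℝ) + 2 := by
    have h1 : K.card + L.card = (K ∪ L).card := (Finset.card_union_of_disjoint hKL).symm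
    have h2 : (K ∪ L).card ≤ Fintype.card (Fin (n+2)) := Finset.card_le_univ _
    rw [Fintype.card_fin] at h2
    have : K.card + L.card ≤ n + 2 := h1 ▸ h2
    exact_mod_cast this
  -- decompose the vanishing quadratic form
  have hdecomp : (∑ i, ∑ j, u i * u j * S i j) + (∑ i, ∑ j, w i * w j * S i j)
      - (∑ i, ∑ j, u i * w j * S i j) - (∑ i, ∑ j, w i * u j * S i j) = 0 := by
    rw [← hzero]
    have hterm : ∀ i j : Fin (n+2), v i * v j * S i j
        = u i * u j * S i j + w i * w j * S i j - u i * w j * S i j - w i * u j * S i j := by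
      intro i j; rw [hv i, hv j]; ring
    simp only [hterm, Finset.sum_sub_distrib, Finset.sum_add_distrib]
  -- assemble the estimates
  have hSa : ∀ i j, i ≠ j → a ≤ S i j := fun i j hij => (hs i j hij).1
  have hSb : ∀ i j, i ≠ j → S i j ≤ b := fun i j hij => (hs i j hij).2
  have huu := upper_est S u hu0 hb0.le hS0 hSb
  have hww := upper_est S w hw0 hb0.le hS0 hSb
  have huw := lower_est S u w hu0 hw0 hdisj hSa
  have hwu := lower_est S w u hw0 hu0 (fun i => by rw [mul_comm]; exact hdisj i) hSa
  simp only [← htdef, htw] at hww huw hwu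
  -- main inequality : 2*a*t^2 ≤ 2*b*t^2 - b*∑u² - b*∑w²
  have hmain : 2*a*t^2 + b * (∑ i, (u i)^2) + b * (∑ i, (w i)^2) ≤ 2*b*t^2 := by
    nlinarith [hdecomp, huu, hww, huw, hwu]
  exact arith_contra (∑ i, (u i)^2) (∑ i, (w i)^2) (t^2) (K.card : ℝ) (L.card : ℝ) a b (n:ℝ)
    (by positivity) ha hb0
    (by exact_mod_cast Finset.card_pos.mpr hKne)
    (by exact_mod_cast Finset.card_pos.mpr hLne)
    hcardsum hab hcu hcw hmain

/- ### Comparison of the p-norm with the Euclidean norm -/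

private lemma s_bounds_le {n : ℕ} (hn : 1 ≤ n) {p : ℝ} (hp : 1 ≤ p) (hp2 : p ≤ 2)
    (d : Fin n → ℝ) {L : ℝ} (hL : 0 < L) (hsum : ∑ k, |d k| ^ p = L ^ p) :
    L ^ (2:ℝ) * (n:ℝ) ^ (1 - 2/p) ≤ ∑ k, (d k)^2 ∧ ∑ k, (d k)^2 ≤ L ^ (2:ℝ) := by
  have hp0 : 0 < p := lt_of_lt_of_le one_pos hp
  have hn0 : (0:ℝ) < n := by exact_mod_cast hn
  have hr : 1 ≤ 2/p := by rw [le_div_iff₀ hp0]; linarith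
  have habs : ∀ k, 0 ≤ |d k| ^ p := fun k => Real.rpow_nonneg (abs_nonneg _) p
  have hpd : p * (2/p) = 2 := by field_simp
  have hsq : ∀ k : Fin n, (d k)^2 = (|d k| ^ p) ^ (2/p) := by
    intro k
    rw [← Real.rpow_mul (abs_nonneg _), hpd]
    rw [show ((2:ℝ) = ((2:ℕ):ℝ)) by norm_num, Real.rpow_natCast, sq_abs]
  have hL2 : (L ^ p) ^ (2/p) = L ^ (2:ℝ) := by rw [← Real.rpow_mul hL.le, hpd]
  constructor
  · have jensen := rpow_sum_le_mul_sum_rpow hn (fun k => |d k| ^ p) habs hr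
    rw [hsum, hL2] at jensen
    simp only [← hsq] at jensen
    have hnpow : (0:ℝ) < (n:ℝ) ^ (1 - 2/p) := Real.rpow_pos_of_pos hn0 _
    have hmul := mul_le_mul_of_nonneg_left jensen hnpow.le
    rw [← mul_assoc, ← Real.rpow_add hn0,
      show (1 - 2/p) + (2/p - 1) = 0 by ring, Real.rpow_zero, one_mul] at hmul
    linarith [hmul]
  · have upper := sum_rpow_le_rpow_sum (fun k => |d k| ^ p) habs hr
    rw [hsum, hL2] at upper
    simp only [← hsq] at upper
    exact upper

private lemma s_bounds_ge {n : ℕ} (hn : 1 ≤ n) {p : ℝ} (hp2 : 2 ≤ p)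
    (d : Fin n → ℝ) {L : ℝ} (hL : 0 < L) (hsum : ∑ k, |d k| ^ p = L ^ p) :
    L ^ (2:ℝ) ≤ ∑ k, (d k)^2 ∧ ∑ k, (d k)^2 ≤ L ^ (2:ℝ) * (n:ℝ) ^ (1 - 2/p) := by
  have hp0 : 0 < p := lt_of_lt_of_le two_pos hp2
  have hn0 : (0:ℝ) < n := by exact_mod_cast hn
  have hr : 1 ≤ p/2 := by rw [le_div_iff₀ two_pos]; linarith
  have hs0 : 0 ≤ ∑ k, (d k)^2 := Finset.sum_nonneg fun k _ => sq_nonneg _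
  have hpd : (2:ℝ) * (p/2) = p := by field_simp
  have hsq : ∀ k : Fin n, |d k| ^ p = ((d k)^2) ^ (p/2) := by
    intro k
    rw [show ((d k)^2 : ℝ) = |d k| ^ (2:ℝ) by
      rw [show ((2:ℝ) = ((2:ℕ):ℝ)) by norm_num, Real.rpow_natCast, sq_abs]]
    rw [← Real.rpow_mul (abs_nonneg _), hpd]
  have hLp : 0 ≤ L ^ p := Real.rpow_nonneg hL.le p
  have hexp : (p/2 - 1) * (2/p) = 1 - 2/p := by field_simp
  constructor
  · have lower := sum_rpow_le_rpow_sum (fun k => (d k)^2) (fun k => sq_nonneg _) hr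
    simp only [← hsq] at lower
    rw [hsum] at lower
    -- L^p ≤ s^(p/2) ; raise to 2/p
    have hmono := Real.rpow_le_rpow hLp lower (by positivity : (0:ℝ) ≤ 2/p)
    rw [← Real.rpow_mul hL.le, ← Real.rpow_mul hs0,
      show (p/2) * (2/p) = 1 by field_simp, Real.rpow_one,
      show p * (2/p) = 2 by field_simp] at hmono
    exact hmono
  · have jensen := rpow_sum_le_mul_sum_rpow hn (fun k => (d k)^2) (fun k => sq_nonneg _) hr
    simp only [← hsq] at jensen
    rw [hsum] at jensen
    -- s^(p/2) ≤ n^(p/2-1) * L^p ; raise to 2/p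
    have hmono := Real.rpow_le_rpow (Real.rpow_nonneg hs0 _) jensen (by positivity : (0:ℝ) ≤ 2/p)
    rw [← Real.rpow_mul hs0, show (p/2) * (2/p) = 1 by field_simp, Real.rpow_one,
      Real.mul_rpow (Real.rpow_nonneg hn0.le _) hLp,
      ← Real.rpow_mul hn0.le, ← Real.rpow_mul hL.le, hexp,
      show p * (2/p) = 2 by field_simp] at hmono
    linarith [hmono]

/- ### The key arithmetic consequence of the hypothesis -/

private lemma key_arith (n : ℕ) (hn : 1 ≤ n) {p : ℝ} (hp : 1 ≤ p)
    (h : |p - 2| < 2 * Real.log (1 + 2 / (n : ℝ)) / Real.log ((n : ℝ) + 2)) :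
    (n:ℝ) ^ (|p - 2| / p) * n < n + 2 := by
  have hp0 : 0 < p := lt_of_lt_of_le one_pos hp
  rcases eq_or_lt_of_le hn with h1 | h2
  · -- n = 1
    have : n = 1 := h1.symm
    subst this
    norm_num [Real.one_rpow]
  · -- n ≥ 2
    have hn0 : (0:ℝ) < n := by positivity
    have hn1 : (1:ℝ) < n := by exact_mod_cast h2
    have hlogn : 0 < Real.log n := Real.log_pos hn1
    have hlogn2 : 0 < Real.log ((n:ℝ) + 2) := Real.log_pos (by linarith)
    have hfrac : Real.log (1 + 2 / (n:ℝ)) = Real.log ((n:ℝ) + 2) - Real.log n := by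
      rw [show (1 + 2 / (n:ℝ)) = ((n:ℝ) + 2) / n by field_simp]
      exact Real.log_div (by linarith) (ne_of_gt hn0)
    have hLpos : 0 < Real.log (1 + 2 / (n:ℝ)) := by
      rw [hfrac]
      have : Real.log (n:ℝ) < Real.log ((n:ℝ) + 2) :=
        Real.log_lt_log hn0 (by linarith)
      linarith
    have h' : |p - 2| * Real.log ((n:ℝ) + 2) < 2 * Real.log (1 + 2 / (n:ℝ)) := by
      rw [div_eq_mul_inv] at h
      calc |p - 2| * Real.log ((n:ℝ) + 2)
          < (2 * Real.log (1 + 2 / (n:ℝ)) * (Real.log ((n:ℝ) + 2))⁻¹) * Real.log ((n:ℝ) + 2) :=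
            mul_lt_mul_of_pos_right h hlogn2
        _ = 2 * Real.log (1 + 2 / (n:ℝ)) := by field_simp
    have key2 : 2 * Real.log n ≤ p * Real.log ((n:ℝ) + 2) := by
      rcases le_total p 2 with hple | hpge
      · have habs : |p - 2| = 2 - p := by rw [abs_of_nonpos (by linarith)]; ring
        rw [habs, hfrac] at h'
        nlinarith
      · have hle : Real.log (n:ℝ) ≤ Real.log ((n:ℝ) + 2) :=
          Real.log_le_log hn0 (by linarith)
        nlinarith
    have target : (|p - 2| / p) * Real.log n < Real.log (1 + 2 / (n:ℝ)) := by
      rw [div_mul_eq_mul_div, div_lt_iff₀ hp0]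
      -- |p-2| * log n < log(1+2/n) * p
      have hstep : (|p - 2| * Real.log n) * Real.log ((n:ℝ) + 2)
          < (Real.log (1 + 2 / (n:ℝ)) * p) * Real.log ((n:ℝ) + 2) := by
        nlinarith [mul_lt_mul_of_pos_right h' hlogn,
          mul_le_mul_of_nonneg_right key2 hLpos.le]
      exact lt_of_mul_lt_mul_right hstep hlogn2.le
    have hpow : (n:ℝ) ^ (|p - 2| / p) < 1 + 2 / (n:ℝ) := by
      rw [Real.rpow_def_of_pos hn0]
      rw [show (1 + 2 / (n:ℝ)) = Real.exp (Real.log (1 + 2 / (n:ℝ))) from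
        (Real.exp_log (by positivity)).symm]
      exact Real.exp_lt_exp.mpr (by rw [mul_comm]; exact target)
    have := mul_lt_mul_of_pos_right hpow hn0
    calc (n:ℝ) ^ (|p - 2| / p) * n < (1 + 2 / (n:ℝ)) * n := this
      _ = n + 2 := by field_simp

private lemma exists_c (n : ℕ) {p : ℝ} (hp : 1 ≤ p) :
    ∃ c : ℝ, 0 ≤ c ∧ |1 - c| ^ p + ((n - 1 : ℕ) : ℝ) * |c| ^ p = 2 := by
  have hp0 : 0 < p := lt_of_lt_of_le one_pos hp
  set g : ℝ → ℝ := fun c => |1 - c| ^ p + ((n - 1 : ℕ) : ℝ) * |c| ^ p with hg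
  have hcont : Continuous g := by
    apply Continuous.add
    · exact (Real.continuous_rpow_const (by linarith)).comp
        ((continuous_const.sub continuous_id).abs)
    · exact continuous_const.mul
        ((Real.continuous_rpow_const (by linarith)).comp continuous_abs)
  have hg0 : g 0 = 1 := by
    simp [hg, Real.one_rpow, Real.zero_rpow (ne_of_gt hp0)]
  have hg3 : 2 ≤ g 3 := by
    have e1 : g 3 = 2 ^ p + ((n - 1 : ℕ) : ℝ) * 3 ^ p := by
      rw [hg]
      norm_num
    have h2p : (2:ℝ) ≤ 2 ^ p := by
      calc (2:ℝ) = 2 ^ (1:ℝ) := (Real.rpow_one 2).symm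
        _ ≤ 2 ^ p := Real.rpow_le_rpow_of_exponent_le one_le_two hp
    have hpos : (0:ℝ) ≤ ((n - 1 : ℕ) : ℝ) * 3 ^ p := by positivity
    rw [e1]; linarith
  have hIVT := intermediate_value_Icc (by norm_num : (0:ℝ) ≤ 3) hcont.continuousOn
  have h2mem : (2:ℝ) ∈ Set.Icc (g 0) (g 3) := by rw [hg0]; exact ⟨by norm_num, hg3⟩
  obtain ⟨c, hc, hgc⟩ := hIVT h2mem
  exact ⟨c, hc.1, hgc⟩

private lemma exists_equilateral (n : ℕ) (hn : 1 ≤ n) {p : ℝ} (hp : 1 ≤ p) :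
    ∃ S : Set (Fin n → ℝ), S.Finite ∧ S.ncard = n + 1 ∧ IsEquilateral p S := by
  classical
  have hp0 : 0 < p := lt_of_lt_of_le one_pos hp
  obtain ⟨c, hc0, hgc⟩ := exists_c n hp
  set f : Fin (n+1) → (Fin n → ℝ) := fun i =>
    if h : (i : ℕ) < n then Pi.single (⟨i, h⟩ : Fin n) 1 else (fun _ => c) with hf
  -- distance between a basis vector and the constant vector
  have keyB : ∀ i' : Fin n, ∑ k, |(Pi.single i' 1 : Fin n → ℝ) k - c| ^ p = 2 := by
    intro i'
    have hterm : ∀ k : Fin n, |(Pi.single i' 1 : Fin n → ℝ) k - c| ^ p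
        = (if k = i' then |1-c|^p - |c|^p else 0) + |c|^p := by
      intro k
      rcases eq_or_ne k i' with rfl | hki
      · rw [Pi.single_eq_same, if_pos rfl]; ring
      · rw [Pi.single_eq_of_ne hki, if_neg hki, zero_sub, abs_neg, zero_add]
    rw [Finset.sum_congr rfl fun k _ => hterm k]
    rw [Finset.sum_add_distrib, Finset.sum_ite_eq' Finset.univ i'
      (fun _ => |1-c|^p - |c|^p)]
    rw [Finset.sum_const, Finset.card_univ, Fintype.card_fin, if_pos (Finset.mem_univ i')]
    have hcast : ((n - 1 : ℕ) : ℝ) = (n:ℝ) - 1 := by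
      rw [Nat.cast_sub hn]; norm_num
    rw [hcast] at hgc
    rw [nsmul_eq_mul]
    linarith
  -- distance between two distinct basis vectors
  have keyA : ∀ i' j' : Fin n, i' ≠ j' →
      ∑ k, |(Pi.single i' 1 : Fin n → ℝ) k - (Pi.single j' 1 : Fin n → ℝ) k| ^ p = 2 := by
    intro i' j' hij
    have hterm : ∀ k : Fin n, |(Pi.single i' 1 : Fin n → ℝ) k - (Pi.single j' 1 : Fin n → ℝ) k| ^ p
        = (if k = i' then (1:ℝ) else 0) + (if k = j' then 1 else 0) := by
      intro k
      rcases eq_or_ne k i' with rfl | hki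
      · rw [Pi.single_eq_same, Pi.single_eq_of_ne hij, if_pos rfl, if_neg hij]
        norm_num [Real.one_rpow]
      · rcases eq_or_ne k j' with rfl | hkj
        · rw [Pi.single_eq_same, Pi.single_eq_of_ne hki, if_neg hki, if_pos rfl]
          norm_num [Real.one_rpow]
        · rw [Pi.single_eq_of_ne hki, Pi.single_eq_of_ne hkj, if_neg hki, if_neg hkj]
          norm_num [Real.zero_rpow (ne_of_gt hp0)]
    rw [Finset.sum_congr rfl fun k _ => hterm k, Finset.sum_add_distrib,
      Finset.sum_ite_eq' Finset.univ i' (fun _ => (1:ℝ)),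
      Finset.sum_ite_eq' Finset.univ j' (fun _ => (1:ℝ)),
      if_pos (Finset.mem_univ i'), if_pos (Finset.mem_univ j')]
    norm_num
  -- all pairwise distances are 2^(1/p)
  have key : ∀ i j : Fin (n+1), i ≠ j → ∑ k, |f i k - f j k| ^ p = 2 := by
    have hBf : ∀ (i j : Fin (n+1)) (hi : (i:ℕ) < n), ¬ (j:ℕ) < n →
        ∑ k, |f i k - f j k| ^ p = 2 := by
      intro i j hi hj
      simp only [hf]
      rw [dif_pos hi, dif_neg hj]
      exact keyB _
    intro i j hij
    by_cases hi : (i:ℕ) < n <;> by_cases hj : (j:ℕ) < n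
    · simp only [hf]
      rw [dif_pos hi, dif_pos hj]
      apply keyA
      intro hc'
      apply hij
      have := congrArg Fin.val hc'
      simp only at this
      exact Fin.ext this
    · exact hBf i j hi hj
    · rw [Finset.sum_congr rfl fun k _ => by rw [abs_sub_comm]]
      exact hBf j i hj hi
    · exfalso
      apply hij
      have h1 : (i:ℕ) = n := by omega
      have h2 : (j:ℕ) = n := by omega
      exact Fin.ext (h1.trans h2.symm)
  -- the map is injective
  have hinj : Function.Injective f := by
    intro i j hfeq
    by_contra hne
    have h2 := key i j hne
    rw [hfeq] at h2
    simp [Real.zero_rpow (ne_of_gt hp0)] at h2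
  refine ⟨Set.range f, Set.finite_range f, ?_, ?_⟩
  · rw [← Set.image_univ, Set.ncard_image_of_injective _ hinj, Set.ncard_univ]
    simp [Nat.card_eq_fintype_card]
  · refine ⟨(2:ℝ) ^ (1/p), Real.rpow_pos_of_pos two_pos _, ?_⟩
    rintro x ⟨i, rfl⟩ y ⟨j, rfl⟩ hxy
    have hij : i ≠ j := fun hh => hxy (by rw [hh])
    unfold pnorm
    simp only [Pi.sub_apply]
    rw [key i j hij]

theorem stmt6 (n : ℕ) (hn : 1 ≤ n) (p : ℝ) (hp : 1 ≤ p)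
    (h : |p - 2| < 2 * Real.log (1 + 2 / (n : ℝ)) / Real.log ((n : ℝ) + 2)) :
    (∃ S : Set (Fin n → ℝ), S.Finite ∧ S.ncard = n + 1 ∧ IsEquilateral p S) ∧
    (∀ S : Set (Fin n → ℝ), IsEquilateral p S → S.Finite ∧ S.ncard ≤ n + 1) := by
  have hp0 : 0 < p := lt_of_lt_of_le one_pos hp
  have hn0 : (0:ℝ) < n := by exact_mod_cast hn
  refine ⟨exists_equilateral n hn hp, ?_⟩
  intro S hS
  obtain ⟨lam, hlam, hd⟩ := hS
  have hka := key_arith n hn hp h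
  -- no n+2 points of S exist
  have main : ∀ x : Fin (n+2) → (Fin n → ℝ), (∀ i, x i ∈ S) → Function.Injective x → False := by
    intro x hxS hinj
    have hd' : ∀ i j : Fin (n+2), i ≠ j → ∑ k, |x i k - x j k| ^ p = lam ^ p := by
      intro i j hij
      have hne : x i ≠ x j := fun hh => hij (hinj hh)
      have hq := hd (x i) (hxS i) (x j) (hxS j) hne
      unfold pnorm at hq
      simp only [Pi.sub_apply] at hq
      have hs0 : 0 ≤ ∑ k, |x i k - x j k| ^ p :=
        Finset.sum_nonneg fun k _ => Real.rpow_nonneg (abs_nonneg _) p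
      calc ∑ k, |x i k - x j k| ^ p
          = ((∑ k, |x i k - x j k| ^ p) ^ (1/p)) ^ p := by
            rw [← Real.rpow_mul hs0, show (1/p)*p = 1 by field_simp, Real.rpow_one]
        _ = lam ^ p := by rw [hq]
    have hpos1 : (0:ℝ) < lam ^ (2:ℝ) := Real.rpow_pos_of_pos hlam _
    have hpos2 : (0:ℝ) < (n:ℝ) ^ (1 - 2/p) := Real.rpow_pos_of_pos hn0 _
    rcases le_total p 2 with hple | hpge
    · -- p ≤ 2 : a = lam² n^{1-2/p}, b = lam²
      have habs2 : |p - 2| / p = 2/p - 1 := by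
        rw [abs_of_nonpos (by linarith : p - 2 ≤ 0)]
        field_simp
        ring
      rw [habs2] at hka
      have hcancel : (n:ℝ) ^ (1 - 2/p) * (n:ℝ) ^ (2/p - 1) = 1 := by
        rw [← Real.rpow_add hn0, show (1 - 2/p) + (2/p - 1) = 0 by ring, Real.rpow_zero]
      have hab : lam ^ (2:ℝ) * (n:ℝ) < (lam ^ (2:ℝ) * (n:ℝ) ^ (1 - 2/p)) * ((n:ℝ) + 2) := by
        calc lam ^ (2:ℝ) * (n:ℝ)
            = lam ^ (2:ℝ) * ((n:ℝ) ^ (1 - 2/p) * (n:ℝ) ^ (2/p - 1)) * n := by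
              rw [hcancel, mul_one]
          _ = (lam ^ (2:ℝ) * (n:ℝ) ^ (1 - 2/p)) * ((n:ℝ) ^ (2/p - 1) * n) := by ring
          _ < (lam ^ (2:ℝ) * (n:ℝ) ^ (1 - 2/p)) * ((n:ℝ) + 2) :=
              mul_lt_mul_of_pos_left hka (mul_pos hpos1 hpos2)
      exact no_overcrowd x (mul_pos hpos1 hpos2) hab (fun i j hij =>
        s_bounds_le hn hp hple (fun k => x i k - x j k) hlam (hd' i j hij))
    · -- 2 ≤ p : a = lam², b = lam² n^{1-2/p}
      have habs2 : |p - 2| / p = 1 - 2/p := by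
        rw [abs_of_nonneg (by linarith : (0:ℝ) ≤ p - 2)]
        field_simp
      rw [habs2] at hka
      have hab : (lam ^ (2:ℝ) * (n:ℝ) ^ (1 - 2/p)) * (n:ℝ) < lam ^ (2:ℝ) * ((n:ℝ) + 2) := by
        calc (lam ^ (2:ℝ) * (n:ℝ) ^ (1 - 2/p)) * (n:ℝ)
            = lam ^ (2:ℝ) * ((n:ℝ) ^ (1 - 2/p) * n) := by ring
          _ < lam ^ (2:ℝ) * ((n:ℝ) + 2) := mul_lt_mul_of_pos_left hka hpos1
      exact no_overcrowd x hpos1 hab (fun i j hij => by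
        have hb := s_bounds_ge hn hpge (fun k => x i k - x j k) hlam (hd' i j hij)
        exact ⟨hb.1, hb.2⟩)
  have nosubset : ∀ T : Set (Fin n → ℝ), T ⊆ S → T.Finite → T.ncard = n + 2 → False := by
    intro T hTS hTfin hTcard
    haveI := hTfin.fintype
    have hcT : Fintype.card T = n + 2 := by
      rw [← Nat.card_coe_set_eq, Nat.card_eq_fintype_card] at hTcard
      exact hTcard
    set e := Fintype.equivFinOfCardEq hcT with he
    apply main (fun i => ((e.symm i : T) : Fin n → ℝ))
    · intro i; exact hTS (e.symm i).2
    · intro i j hij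
      have h1 : e.symm i = e.symm j := Subtype.coe_injective hij
      have := congrArg e h1
      simpa using this
  have Sfin : S.Finite := by
    by_contra hinf
    obtain ⟨T, hTS, hTfin, hTcard⟩ := Set.Infinite.exists_subset_ncard_eq hinf (n+2)
    exact nosubset T hTS hTfin hTcard
  refine ⟨Sfin, ?_⟩
  by_contra hgt
  push_neg at hgt
  obtain ⟨T, hTS, hTcard⟩ := Set.exists_subset_card_eq (by omega : n + 2 ≤ S.ncard)
  exact nosubset T hTS (Sfin.subset hTS) hTcard
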